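/- The only normalization-equivariant function from ℝ to ℝ is the identity: if φ : ℝ → ℝ satisfies φ(λx + μ) = λ·φ(x) + μ for all x ∈ ℝ, all real λ > 0 and all μ ∈ ℝ, then φ(x) = x for all x. In particular, there is no nonlinear element-wise activation function preserving normalization-equivariance. -/
import Mathlib

/-- The only normalization-equivariant function from `ℝ` to `ℝ` is the identity. -/
theorem normalizationEquivariant_real_eq_id (φ : ℝ → ℝ)
    (hφ : ∀ (x l μ : ℝ), 0 < l → φ (l * x + μ) = l * φ x + μ) :
    ∀ x : ℝ, φ x = x := by
  have h0 : φ 0 = 0 := by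
    have := hφ 0 2 0 (by norm_num)
    simp at this
    linarith
  intro x
  have := hφ 0 1 x (by norm_num)
  simp [h0] at this
  exact this
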